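/- Let 𝒜 be a subring of the algebraic integers closed under complex conjugation, and let {W_i}_{i=1}^n be an equichordal tight fusion frame of n m-dimensional subspaces of 𝔽^k with orthonormal basis matrices L_i such that all entries of √k·L_i lie in 𝒜. Then km(mn−k)/(n−1) is an integer. -/

import Mathlib

open Matrix in
/-- Integrality condition for flat equichordal tight fusion frames: if all entries
of the `√k·Lᵢ` lie in a subring of the algebraic integers closed under conjugation,
then `km(mn-k)/(n-1)` is an integer. -/
theorem equichordal_integrality (n m k : ℕ) (hn : 1 < n) (hk : 0 < k) (hm : 0 < m)
    (A : Subring ℂ) (hAint : ∀ x ∈ A, IsIntegral ℤ x)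
    (hAconj : ∀ x ∈ A, (starRingEnd ℂ) x ∈ A)
    (L : Fin n → Matrix (Fin k) (Fin m) ℂ)
    (honb : ∀ i, (L i)ᴴ * L i = 1)
    (B : ℝ) (hB : 0 < B) (htight : ∑ i, L i * (L i)ᴴ = (B : ℂ) • 1)
    (hchordal : ∀ i j, i ≠ j →
      ((L i * (L i)ᴴ) * (L j * (L j)ᴴ)).trace =
        (((m : ℝ) * ((m : ℝ) * n - k) / ((k : ℝ) * ((n : ℝ) - 1)) : ℝ) : ℂ))
    (hflat : ∀ i t s, (Real.sqrt k : ℂ) * L i t s ∈ A) :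
    ∃ z : ℤ, (k : ℝ) * m * ((m : ℝ) * n - k) / ((n : ℝ) - 1) = z := by
  have hn1 : ((n : ℝ) - 1) ≠ 0 := by
    have : (1 : ℝ) < n := by exact_mod_cast hn
    linarith
  have hk0 : ((k : ℝ)) ≠ 0 := Nat.cast_ne_zero.mpr hk.ne'
  set i : Fin n := ⟨0, by omega⟩ with hi
  set j : Fin n := ⟨1, by omega⟩ with hj
  have hij : i ≠ j := by simp [hi, hj, Fin.ext_iff]
  set S : Fin n → Matrix (Fin k) (Fin m) ℂ := fun i => (Real.sqrt k : ℂ) • L i with hS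
  set T : Matrix (Fin m) (Fin m) ℂ := (S i)ᴴ * S j with hT
  have hTA : ∀ t s, T t s ∈ A := by
    intro t s
    rw [hT, Matrix.mul_apply]
    apply Subring.sum_mem
    intro r _
    rw [Matrix.conjTranspose_apply, hS]
    simp only [Matrix.smul_apply, smul_eq_mul]
    exact A.mul_mem (hAconj _ (hflat i r t)) (hflat j r s)
  have hwA : (Tᴴ * T).trace ∈ A := by
    rw [Matrix.trace]
    apply Subring.sum_mem
    intro s _
    rw [Matrix.diag_apply, Matrix.mul_apply]
    apply Subring.sum_mem
    intro t _
    rw [Matrix.conjTranspose_apply]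
    exact A.mul_mem (hAconj _ (hTA t s)) (hTA t s)
  -- compute the trace
  have hsk : (Real.sqrt k : ℂ) * (Real.sqrt k : ℂ) = (k : ℂ) := by
    rw [← Complex.ofReal_mul, Real.mul_self_sqrt (Nat.cast_nonneg k)]
    norm_cast
  have hTval : T = (k : ℂ) • ((L i)ᴴ * (L j)) := by
    rw [hT, hS]
    simp only [Matrix.conjTranspose_smul, Matrix.smul_mul, Matrix.mul_smul, smul_smul]
    rw [Complex.star_def, Complex.conj_ofReal, hsk]
  have htr : (Tᴴ * T).trace = ((k : ℂ) * k) * ((L i * (L i)ᴴ) * (L j * (L j)ᴴ)).trace := by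
    rw [hTval]
    simp only [Matrix.conjTranspose_smul, Matrix.smul_mul, Matrix.mul_smul, smul_smul,
      Matrix.trace_smul, Matrix.conjTranspose_mul, Matrix.conjTranspose_conjTranspose]
    rw [Complex.star_def, Complex.conj_natCast]
    rw [show (L j)ᴴ * L i * ((L i)ᴴ * L j) = (L j)ᴴ * (L i * (L i)ᴴ * L j) by
      simp only [Matrix.mul_assoc], Matrix.trace_mul_comm]
    rw [show L i * (L i)ᴴ * L j * (L j)ᴴ = L i * (L i)ᴴ * (L j * (L j)ᴴ) by
      simp only [Matrix.mul_assoc]]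
    simp [smul_eq_mul]
  rw [hchordal i j hij] at htr
  -- so the trace equals the real value v
  set q : ℚ := ((k : ℚ) * m * ((m : ℚ) * n - k)) / ((n : ℚ) - 1) with hq
  have hqC : ((q : ℂ)) = (Tᴴ * T).trace := by
    have hn1C : ((n : ℂ) - 1) ≠ 0 := by
      intro h
      apply hn1
      have := congrArg Complex.re h
      simpa using this
    have hkC : ((k : ℂ)) ≠ 0 := Nat.cast_ne_zero.mpr hk.ne'
    rw [htr, hq]
    push_cast
    field_simp
  have hint : IsIntegral ℤ (q : ℂ) := by
    rw [hqC]; exact hAint _ hwA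
  have hintq : IsIntegral ℤ q := by
    have : algebraMap ℚ ℂ q = (q : ℂ) := by
      exact eq_ratCast (algebraMap ℚ ℂ) q
    rw [← this] at hint
    exact (isIntegral_algebraMap_iff (algebraMap ℚ ℂ).injective).mp hint
  obtain ⟨z, hz⟩ := IsIntegrallyClosed.isIntegral_iff.mp hintq
  have hz' : ((z : ℚ)) = q := by rw [← hz]; simp
  refine ⟨z, ?_⟩
  have hqR : ((q : ℝ)) = (k : ℝ) * m * ((m : ℝ) * n - k) / ((n : ℝ) - 1) := by
    rw [hq]; push_cast; ring
  rw [← hqR, ← hz']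
  push_cast
  ring
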